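/- The sequence a(n) = Σ_{k=0}^{n} C(n,k)^2 C(2k,k) satisfies the recurrence (n+1)^2 a(n+1) = (10n^2+10n+3) a(n) − 9 n^2 a(n-1) for all n ≥ 1, with a(0)=1, a(1)=3. -/

import Mathlib

open Finset

private lemma cast_choose_right (n k : ℕ) :
    ((n : ℤ) - k) * n.choose k = (k + 1) * n.choose (k + 1) := by
  rcases le_or_gt k n with h | h
  · have := congrArg (Nat.cast : ℕ → ℤ) (Nat.choose_succ_right_eq n k)
    push_cast [Nat.cast_sub h] at this
    linarith
  · rw [Nat.choose_eq_zero_of_lt h, Nat.choose_eq_zero_of_lt (by omega)]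
    push_cast
    ring

private lemma cast_choose_succ (n k : ℕ) :
    ((n : ℤ) + 1 - k) * (n + 1).choose k = ((n : ℤ) + 1) * n.choose k := by
  rcases le_or_gt k (n + 1) with h | h
  · have := congrArg (Nat.cast : ℕ → ℤ) (Nat.choose_mul_succ_eq n k)
    push_cast [Nat.cast_sub h] at this
    linarith
  · rw [Nat.choose_eq_zero_of_lt h, Nat.choose_eq_zero_of_lt (by omega)]
    push_cast
    ring

private lemma cast_central (k : ℕ) :
    ((k : ℤ) + 1) * (2 * (k + 1)).choose (k + 1) = 2 * (2 * k + 1) * (2 * k).choose k := by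
  have := congrArg (Nat.cast : ℕ → ℤ) (Nat.succ_mul_centralBinom_succ k)
  simp only [Nat.centralBinom] at this
  push_cast at this
  linarith

/-- Zeilberger certificate function. -/
private def Hc (n k : ℕ) : ℤ :=
  (k : ℤ) ^ 3 * (3 * k - 4 * n - 4) * ((n + 1).choose k : ℤ) ^ 2 * ((2 * k).choose k : ℤ)

private lemma key (m k : ℕ) :
    ((m : ℤ) + 2) ^ 2 *
      (((m : ℤ) + 2) ^ 2 * ((m + 2).choose k : ℤ) ^ 2 * ((2 * k).choose k : ℤ)
        - (10 * ((m : ℤ) + 1) ^ 2 + 10 * ((m : ℤ) + 1) + 3) *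
            ((m + 1).choose k : ℤ) ^ 2 * ((2 * k).choose k : ℤ)
        + 9 * ((m : ℤ) + 1) ^ 2 * (m.choose k : ℤ) ^ 2 * ((2 * k).choose k : ℤ))
      = Hc (m + 1) (k + 1) - Hc (m + 1) k := by
  simp only [Hc, show m + 1 + 1 = m + 2 from rfl]
  push_cast
  have hA := cast_choose_right (m + 2) k
  have hB := cast_choose_succ (m + 1) k
  have hB' := cast_choose_succ m k
  have hC := cast_central k
  set A : ℤ := ((m + 2).choose k : ℤ)
  set As : ℤ := ((m + 2).choose (k + 1) : ℤ)
  set B2 : ℤ := ((m + 1).choose k : ℤ)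
  set B1 : ℤ := (m.choose k : ℤ)
  set b : ℤ := ((2 * k).choose k : ℤ)
  set bs : ℤ := ((2 * (k + 1)).choose (k + 1) : ℤ)
  have e1 : ((k : ℤ) + 1) ^ 2 * As ^ 2 = ((m : ℤ) + 2 - k) ^ 2 * A ^ 2 := by
    push_cast at hA ⊢
    linear_combination (-(((m : ℤ) + 2 - k) * A + ((k : ℤ) + 1) * As)) * hA
  have e2 : ((m : ℤ) + 2) ^ 2 * B2 ^ 2 = ((m : ℤ) + 2 - k) ^ 2 * A ^ 2 := by
    push_cast at hB ⊢
    linear_combination (-((((m : ℤ) + 2 - k) * A + ((m : ℤ) + 2) * B2))) * hB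
  have e3 : ((m : ℤ) + 1) ^ 2 * B1 ^ 2 = ((m : ℤ) + 1 - k) ^ 2 * B2 ^ 2 := by
    linear_combination (-((((m : ℤ) + 1 - k) * B2 + ((m : ℤ) + 1) * B1))) * hB'
  have e4 : ((k : ℤ) + 1) ^ 3 * As ^ 2 * bs
      = ((m : ℤ) + 2 - k) ^ 2 * A ^ 2 * (2 * (2 * k + 1)) * b := by
    linear_combination ((k : ℤ) + 1) * bs * e1 + ((m : ℤ) + 2 - k) ^ 2 * A ^ 2 * hC
  linear_combination (-(3 * (k : ℤ) - 4 * ((m : ℤ) + 1) - 1)) * e4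
    + 9 * ((m : ℤ) + 2) ^ 2 * b * e3
    + (9 * ((m : ℤ) + 1 - k) ^ 2 * b
        - (10 * ((m : ℤ) + 1) ^ 2 + 10 * ((m : ℤ) + 1) + 3) * b) * e2

/-- The sequence `a n = ∑ k, (n.choose k)^2 * ((2k).choose k)` satisfies the recurrence
`(n+1)² a(n+1) = (10n²+10n+3) a(n) − 9 n² a(n-1)` for all `n ≥ 1`,
with `a 0 = 1` and `a 1 = 3`. -/
theorem zagier_c_recurrence (a : ℕ → ℤ)
    (ha : ∀ n, a n = ∑ k ∈ Finset.range (n + 1),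
      ((Nat.choose n k : ℤ)) ^ 2 * (Nat.choose (2 * k) k : ℤ)) :
    a 0 = 1 ∧ a 1 = 3 ∧
      ∀ n : ℕ, 1 ≤ n →
        ((n : ℤ) + 1) ^ 2 * a (n + 1)
          = (10 * (n : ℤ) ^ 2 + 10 * n + 3) * a n - 9 * (n : ℤ) ^ 2 * a (n - 1) := by
  refine ⟨by simp [ha 0], by norm_num [ha 1, Finset.sum_range_succ], ?_⟩
  rintro n hn
  obtain ⟨m, rfl⟩ : ∃ m, n = m + 1 := ⟨n - 1, by omega⟩
  -- rewrite all three sums over the common range (m + 3)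
  have hsum : ∀ j : ℕ, j ≤ m + 2 → a j = ∑ k ∈ range (m + 3),
      ((j.choose k : ℤ)) ^ 2 * ((2 * k).choose k : ℤ) := by
    intro j hj
    rw [ha j]
    apply Finset.sum_subset
    · intro x hx
      simp only [mem_range] at hx ⊢
      omega
    · intro x _ hx
      simp only [mem_range, not_lt] at hx
      rw [Nat.choose_eq_zero_of_lt (by omega)]
      push_cast
      ring
  have h2 := hsum (m + 2) le_rfl
  have h1 := hsum (m + 1) (by omega)
  have h0 := hsum m (by omega)
  have htel : ∑ k ∈ range (m + 3),
      (((m : ℤ) + 2) ^ 2 *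
        (((m : ℤ) + 2) ^ 2 * ((m + 2).choose k : ℤ) ^ 2 * ((2 * k).choose k : ℤ)
          - (10 * ((m : ℤ) + 1) ^ 2 + 10 * ((m : ℤ) + 1) + 3) *
              ((m + 1).choose k : ℤ) ^ 2 * ((2 * k).choose k : ℤ)
          + 9 * ((m : ℤ) + 1) ^ 2 * (m.choose k : ℤ) ^ 2 * ((2 * k).choose k : ℤ)))
      = 0 := by
    have := Finset.sum_range_sub (fun k => Hc (m + 1) k) (m + 3)
    calc _ = ∑ k ∈ range (m + 3), (Hc (m + 1) (k + 1) - Hc (m + 1) k) :=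
          Finset.sum_congr rfl (fun k _ => key m k)
      _ = Hc (m + 1) (m + 3) - Hc (m + 1) 0 := this
      _ = 0 := by
          simp [Hc, Nat.choose_eq_zero_of_lt (by omega : m + 2 < m + 3)]
  have key2 : ((m : ℤ) + 2) ^ 2 *
      (((m : ℤ) + 2) ^ 2 * a (m + 2)
        - (10 * ((m : ℤ) + 1) ^ 2 + 10 * ((m : ℤ) + 1) + 3) * a (m + 1)
        + 9 * ((m : ℤ) + 1) ^ 2 * a m) = 0 := by
    rw [h2, h1, h0]
    rw [show (((m : ℤ) + 2) ^ 2 *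
      (((m : ℤ) + 2) ^ 2 * (∑ k ∈ range (m + 3),
          (((m+2).choose k : ℤ)) ^ 2 * ((2 * k).choose k : ℤ))
        - (10 * ((m : ℤ) + 1) ^ 2 + 10 * ((m : ℤ) + 1) + 3) * (∑ k ∈ range (m + 3),
          (((m+1).choose k : ℤ)) ^ 2 * ((2 * k).choose k : ℤ))
        + 9 * ((m : ℤ) + 1) ^ 2 * (∑ k ∈ range (m + 3),
          ((m.choose k : ℤ)) ^ 2 * ((2 * k).choose k : ℤ))))
      = ∑ k ∈ range (m + 3),
      (((m : ℤ) + 2) ^ 2 *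
        (((m : ℤ) + 2) ^ 2 * ((m + 2).choose k : ℤ) ^ 2 * ((2 * k).choose k : ℤ)
          - (10 * ((m : ℤ) + 1) ^ 2 + 10 * ((m : ℤ) + 1) + 3) *
              ((m + 1).choose k : ℤ) ^ 2 * ((2 * k).choose k : ℤ)
          + 9 * ((m : ℤ) + 1) ^ 2 * (m.choose k : ℤ) ^ 2 * ((2 * k).choose k : ℤ)))
      from by
        rw [Finset.mul_sum, Finset.mul_sum, Finset.mul_sum,
          ← Finset.sum_sub_distrib, ← Finset.sum_add_distrib, Finset.mul_sum]
        exact Finset.sum_congr rfl fun k _ => by ring]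
    exact htel
  have hne : (((m : ℤ) + 2) ^ 2) ≠ 0 := by positivity
  have inner : ((m : ℤ) + 2) ^ 2 * a (m + 2)
        - (10 * ((m : ℤ) + 1) ^ 2 + 10 * ((m : ℤ) + 1) + 3) * a (m + 1)
        + 9 * ((m : ℤ) + 1) ^ 2 * a m = 0 := by
    rcases mul_eq_zero.mp key2 with h | h
    · exact absurd h hne
    · exact h
  have hsub : m + 1 - 1 = m := rfl
  rw [hsub]
  push_cast
  linarith
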